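/- For all integers i ≥ 1 and k ≥ 1, one has x^{−2^k} · (x·c_i²)^{2^k} = c_{i+2^k−1}² · w_{i,i,k}; in particular c_{i+2^k−1}² · w_{i,i,k} ∈ Γ^{2^k}. (The identity used in the proof of Proposition 3.4 of the paper to show w_{i,i,k} ∈ G^{2^k}.) -/

import Mathlib

namespace Paper

variable {G : Type*} [Group G]

/-- The paper's commutator `[a,b] = a⁻¹ b⁻¹ a b`. -/
def pc {G : Type*} [Group G] (a b : G) : G := a⁻¹ * b⁻¹ * a * b

/-- The left-normed iterated commutator `[a, x, (r)…, x]`. -/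
def itc {G : Type*} [Group G] (x a : G) : ℕ → G
  | 0 => a
  | r + 1 => pc (itc x a r) x

/-- `c_i`, where `c_1 = y` and `c_{i+1} = [c_i, x]`; equivalently `c_i = [y, x, (i-1)…, x]`. -/
def cc (x y : G) (i : ℕ) : G := itc x y (i - 1)

/-- `z_{m,n} = [c_m, c_n]`. -/
def zz (x y : G) (m n : ℕ) : G := pc (cc x y m) (cc x y n)

/-- `H = ⟨c_i : i ≥ 1⟩`. -/
def Hsub (x y : G) : Subgroup G :=
  Subgroup.closure {g | ∃ i, 1 ≤ i ∧ g = cc x y i}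

/-- `Z = ⟨c_l², z_{m,n} : l, m, n ≥ 1⟩`. -/
def Zsub (x y : G) : Subgroup G :=
  Subgroup.closure ({g | ∃ l, 1 ≤ l ∧ g = cc x y l ^ 2} ∪
    {g | ∃ m n, 1 ≤ m ∧ 1 ≤ n ∧ g = zz x y m n})

/-- `w_{i,j,k} = ∏_{t=1}^{2^k−1} [z_{i+t,j+t−1}, x, (2^k−1−t)…, x]`,
factors in order of increasing `t` (reindexed by `t ↦ t+1`). -/
def ww (x y : G) (i j k : ℕ) : G :=
  ((List.range (2 ^ k - 1)).map
    (fun t => itc x (zz x y (i + t + 1) (j + t)) (2 ^ k - 2 - t))).prod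

/-- `L_k`, the normal closure of `{w_{i,j,k} : i,j ≥ 1} ∪ {z_{m,n} : m ≥ 2^k, n ≥ 1}`. -/
def Lsub (x y : G) (k : ℕ) : Subgroup G :=
  Subgroup.normalClosure ({g | ∃ i j, 1 ≤ i ∧ 1 ≤ j ∧ g = ww x y i j k} ∪
    {g | ∃ m n, 2 ^ k ≤ m ∧ 1 ≤ n ∧ g = zz x y m n})

/-- `Q_k = ⟨c_l² : l ≥ 2^{k−1}⟩`. -/
def Qsub (x y : G) (k : ℕ) : Subgroup G :=
  Subgroup.closure {g | ∃ l, 2 ^ (k - 1) ≤ l ∧ g = cc x y l ^ 2}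

/-- `d_k(h) = [h,x,(2^k−1)…,x]⁻¹ · x^{−2^k} · (xh)^{2^k}`. -/
def dd (x y : G) (k : ℕ) (h : G) : G :=
  (itc x h (2 ^ k - 1))⁻¹ * (x ^ 2 ^ k)⁻¹ * (x * h) ^ 2 ^ k

/-- `Γ^{2^k} = ⟨g^{2^k} : g ∈ Γ⟩`. -/
def pow2Sub (G : Type*) [Group G] (k : ℕ) : Subgroup G :=
  Subgroup.closure {g | ∃ a : G, g = a ^ 2 ^ k}

/-- `ζ(h₁,h₂) = ∏_{ℓ=0}^{2^k−2} [h₁^x, x, (ℓ)…, x, h₂, x, (2^k−2−ℓ)…, x]`,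
factors in order of increasing `ℓ`. -/
def zeta (x : G) (k : ℕ) (h₁ h₂ : G) : G :=
  ((List.range (2 ^ k - 1)).map
    (fun l => itc x (pc (itc x (x⁻¹ * h₁ * x) l) h₂) (2 ^ k - 2 - l))).prod

/-! ### Auxiliary lemmas -/

section Aux

variable (x y : G)

lemma itc_comp (a : G) (r s : ℕ) : itc x (itc x a r) s = itc x a (r + s) := by
  induction s with
  | zero => rfl
  | succ s ih =>
    rw [Nat.add_succ]; simp only [itc]; rw [ih]; rfl

lemma itc_one_right (g : G) : itc x g 1 = pc g x := rfl

lemma cc_mem (i : ℕ) (hi : 1 ≤ i) : cc x y i ∈ Hsub x y :=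
  Subgroup.subset_closure ⟨i, hi, rfl⟩

lemma ccsq_mem (l : ℕ) (hl : 1 ≤ l) : cc x y l ^ 2 ∈ Zsub x y :=
  Subgroup.subset_closure (Or.inl ⟨l, hl, rfl⟩)

lemma zz_mem (m n : ℕ) (hm : 1 ≤ m) (hn : 1 ≤ n) : zz x y m n ∈ Zsub x y :=
  Subgroup.subset_closure (Or.inr ⟨m, n, hm, hn, rfl⟩)

lemma Zsub_le_Hsub : Zsub x y ≤ Hsub x y := by
  rw [Zsub, Subgroup.closure_le]
  rintro g (⟨l, hl, rfl⟩ | ⟨m, n, hm, hn, rfl⟩)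
  · exact pow_mem (cc_mem x y l hl) 2
  · show zz x y m n ∈ Hsub x y
    simp only [zz, pc]
    exact mul_mem (mul_mem (mul_mem (inv_mem (cc_mem x y m hm))
      (inv_mem (cc_mem x y n hn))) (cc_mem x y m hm)) (cc_mem x y n hn)

lemma cc_succ (i : ℕ) (hi : 1 ≤ i) : cc x y (i + 1) = pc (cc x y i) x := by
  unfold cc
  rw [show i + 1 - 1 = (i - 1) + 1 by omega]
  rfl

lemma conj_cc (i : ℕ) (hi : 1 ≤ i) :
    x⁻¹ * cc x y i * x = cc x y i * cc x y (i + 1) := by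
  rw [cc_succ x y i hi, pc]; group

end Aux

section GenericGroup

lemma pc_conj (g a b : G) : g⁻¹ * pc a b * g = pc (g⁻¹ * a * g) (g⁻¹ * b * g) := by
  simp only [pc]; group

lemma sq_expand (a b : G) (h : pc b a * b = b * pc b a) :
    (a * b) ^ 2 = a ^ 2 * b ^ 2 * pc b a := by
  have h1 : b * a = a * b * pc b a := by simp only [pc]; group
  calc (a * b) ^ 2 = a * (b * a) * b := by rw [sq]; simp only [mul_assoc]
    _ = a * (a * b * pc b a) * b := by rw [h1]
    _ = a ^ 2 * b * (pc b a * b) := by simp only [sq, mul_assoc]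
    _ = a ^ 2 * b * (b * pc b a) := by rw [h]
    _ = a ^ 2 * b ^ 2 * pc b a := by simp only [sq, mul_assoc]

lemma pc_mul_left (a b c : G) (h : pc a c * b = b * pc a c) :
    pc (a * b) c = pc a c * pc b c := by
  have h1 : pc (a * b) c = b⁻¹ * (pc a c * b) * (b⁻¹ * c⁻¹ * b * c) := by
    simp only [pc]; group
  rw [h1, h]; simp only [pc]; group

lemma pc_mul_right (a c d : G) (h : pc a c * d = d * pc a c) :
    pc a (c * d) = pc a d * pc a c := by
  have h1 : pc a (c * d) = (a⁻¹ * d⁻¹ * a) * (pc a c * d) := by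
    simp only [pc]; group
  rw [h1, h]; simp only [pc]; group

end GenericGroup

section WithHyp

variable (x y : G)

lemma conj_mem_Z (hca : ∀ z ∈ Zsub x y, ∀ h ∈ Hsub x y, z * h = h * z)
    {z : G} (hz : z ∈ Zsub x y) : x⁻¹ * z * x ∈ Zsub x y := by
  induction hz using Subgroup.closure_induction with
  | mem g hg =>
    obtain (⟨l, hl, rfl⟩ | ⟨m, n, hm, hn, rfl⟩) := hg
    · have h1 : x⁻¹ * cc x y l ^ 2 * x = (x⁻¹ * cc x y l * x) ^ 2 := by
        rw [pow_two, pow_two]; group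
      have hcomm : pc (cc x y (l + 1)) (cc x y l) * cc x y (l + 1)
          = cc x y (l + 1) * pc (cc x y (l + 1)) (cc x y l) :=
        hca _ (zz_mem x y (l + 1) l (by omega) hl) _ (cc_mem x y (l + 1) (by omega))
      rw [h1, conj_cc x y l hl, sq_expand _ _ hcomm]
      exact mul_mem (mul_mem (ccsq_mem x y l hl) (ccsq_mem x y (l + 1) (by omega)))
        (zz_mem x y (l + 1) l (by omega) hl)
    · show x⁻¹ * zz x y m n * x ∈ Zsub x y
      rw [zz, pc_conj, conj_cc x y m hm, conj_cc x y n hn]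
      have e1 : pc (cc x y m) (cc x y n * cc x y (n + 1))
          = zz x y m (n + 1) * zz x y m n :=
        pc_mul_right _ _ _ (hca _ (zz_mem x y m n hm hn) _ (cc_mem x y (n + 1) (by omega)))
      have e2 : pc (cc x y (m + 1)) (cc x y n * cc x y (n + 1))
          = zz x y (m + 1) (n + 1) * zz x y (m + 1) n :=
        pc_mul_right _ _ _
          (hca _ (zz_mem x y (m + 1) n (by omega) hn) _ (cc_mem x y (n + 1) (by omega)))
      have hcm : pc (cc x y m) (cc x y n * cc x y (n + 1)) * cc x y (m + 1)
          = cc x y (m + 1) * pc (cc x y m) (cc x y n * cc x y (n + 1)) := by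
        rw [e1]
        exact hca _ (mul_mem (zz_mem x y m (n + 1) hm (by omega)) (zz_mem x y m n hm hn))
          _ (cc_mem x y (m + 1) (by omega))
      rw [pc_mul_left _ _ _ hcm, e1, e2]
      exact mul_mem (mul_mem (zz_mem x y m (n + 1) hm (by omega)) (zz_mem x y m n hm hn))
        (mul_mem (zz_mem x y (m + 1) (n + 1) (by omega) (by omega))
          (zz_mem x y (m + 1) n (by omega) hn))
  | one => simpa using (Zsub x y).one_mem
  | mul a b _ _ ha hb =>
    have h : x⁻¹ * (a * b) * x = (x⁻¹ * a * x) * (x⁻¹ * b * x) := by group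
    rw [h]; exact mul_mem ha hb
  | inv a _ ha =>
    have h : x⁻¹ * a⁻¹ * x = (x⁻¹ * a * x)⁻¹ := by group
    rw [h]; exact inv_mem ha

lemma pcx_mem (hca : ∀ z ∈ Zsub x y, ∀ h ∈ Hsub x y, z * h = h * z)
    {z : G} (hz : z ∈ Zsub x y) : pc z x ∈ Zsub x y := by
  have h : pc z x = z⁻¹ * (x⁻¹ * z * x) := by simp only [pc]; group
  rw [h]; exact mul_mem (inv_mem hz) (conj_mem_Z x y hca hz)

lemma itc_mem (hca : ∀ z ∈ Zsub x y, ∀ h ∈ Hsub x y, z * h = h * z)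
    {z : G} (hz : z ∈ Zsub x y) (r : ℕ) : itc x z r ∈ Zsub x y := by
  induction r with
  | zero => exact hz
  | succ r ih => simp only [itc]; exact pcx_mem x y hca ih

lemma pcx_mul (hca : ∀ z ∈ Zsub x y, ∀ h ∈ Hsub x y, z * h = h * z)
    {z w : G} (hz : z ∈ Zsub x y) (hw : w ∈ Zsub x y) :
    pc (z * w) x = pc z x * pc w x :=
  pc_mul_left z w x (hca _ (pcx_mem x y hca hz) _ (Zsub_le_Hsub x y hw))

lemma itc_mul (hca : ∀ z ∈ Zsub x y, ∀ h ∈ Hsub x y, z * h = h * z)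
    {z w : G} (hz : z ∈ Zsub x y) (hw : w ∈ Zsub x y) (r : ℕ) :
    itc x (z * w) r = itc x z r * itc x w r := by
  induction r with
  | zero => rfl
  | succ r ih =>
    simp only [itc]
    rw [ih, pcx_mul x y hca (itc_mem x y hca hz r) (itc_mem x y hca hw r)]

lemma itc_one (r : ℕ) : itc x (1 : G) r = 1 := by
  induction r with
  | zero => rfl
  | succ r ih => simp only [itc]; rw [ih]; simp [pc]

lemma itc_prod (hca : ∀ z ∈ Zsub x y, ∀ h ∈ Hsub x y, z * h = h * z)
    (l : List G) (hl : ∀ g ∈ l, g ∈ Zsub x y) (r : ℕ) :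
    itc x l.prod r = (l.map (fun g => itc x g r)).prod := by
  induction l with
  | nil => simp [itc_one]
  | cons a l ih =>
    simp only [List.prod_cons, List.map_cons]
    rw [itc_mul x y hca (hl a List.mem_cons_self)
      (list_prod_mem (fun g hg => hl g (List.mem_cons_of_mem a hg))),
      ih (fun g hg => hl g (List.mem_cons_of_mem a hg))]

lemma conj_pow (hca : ∀ z ∈ Zsub x y, ∀ h ∈ Hsub x y, z * h = h * z)
    (hz2 : ∀ z ∈ Zsub x y, z ^ 2 = 1) (k : ℕ) {z : G} (hz : z ∈ Zsub x y) :
    (x ^ 2 ^ k)⁻¹ * z * x ^ 2 ^ k = z * itc x z (2 ^ k) := by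
  induction k generalizing z with
  | zero =>
    simp only [pow_zero, pow_one, itc_one_right, pc]
    group
  | succ k ih =>
    have hN : (2 : ℕ) ^ (k + 1) = 2 ^ k + 2 ^ k := by rw [pow_succ, Nat.mul_two]
    rw [hN, pow_add]
    have h1 := ih hz
    have h3 := ih (itc_mem x y hca hz (2 ^ k))
    calc (x ^ 2 ^ k * x ^ 2 ^ k)⁻¹ * z * (x ^ 2 ^ k * x ^ 2 ^ k)
        = (x ^ 2 ^ k)⁻¹ * ((x ^ 2 ^ k)⁻¹ * z * x ^ 2 ^ k) * x ^ 2 ^ k := by group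
      _ = (x ^ 2 ^ k)⁻¹ * (z * itc x z (2 ^ k)) * x ^ 2 ^ k := by rw [h1]
      _ = ((x ^ 2 ^ k)⁻¹ * z * x ^ 2 ^ k)
            * ((x ^ 2 ^ k)⁻¹ * itc x z (2 ^ k) * x ^ 2 ^ k) := by group
      _ = (z * itc x z (2 ^ k)) * (itc x z (2 ^ k) * itc x (itc x z (2 ^ k)) (2 ^ k)) := by
          rw [h1, h3]
      _ = z * (itc x z (2 ^ k) * itc x z (2 ^ k)) * itc x z (2 ^ k + 2 ^ k) := by
          rw [itc_comp]; group
      _ = z * itc x z (2 ^ k + 2 ^ k) := by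
          rw [← sq, hz2 _ (itc_mem x y hca hz (2 ^ k))]; group

lemma pcx_ccsq (hca : ∀ z ∈ Zsub x y, ∀ h ∈ Hsub x y, z * h = h * z)
    (j : ℕ) (hj : 1 ≤ j) :
    pc (cc x y j ^ 2) x = cc x y (j + 1) ^ 2 * zz x y (j + 1) j := by
  have h1 : pc (cc x y j ^ 2) x = (cc x y j ^ 2)⁻¹ * (x⁻¹ * cc x y j * x) ^ 2 := by
    simp only [pc, sq]; group
  have hcomm : pc (cc x y (j + 1)) (cc x y j) * cc x y (j + 1)
      = cc x y (j + 1) * pc (cc x y (j + 1)) (cc x y j) :=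
    hca _ (zz_mem x y (j + 1) j (by omega) hj) _ (cc_mem x y (j + 1) (by omega))
  rw [h1, conj_cc x y j hj, sq_expand _ _ hcomm, zz]
  group

end WithHyp

/-- `P_{j,r} = ∏_{t=0}^{r-1} [z_{j+t+1, j+t}, x, (r−1−t)…, x]`. -/
def PP (x y : G) (j r : ℕ) : G :=
  ((List.range r).map (fun t => itc x (zz x y (j + t + 1) (j + t)) (r - 1 - t))).prod

lemma ww_eq_PP (x y : G) (i k : ℕ) : ww x y i i k = PP x y i (2 ^ k - 1) := by
  rw [ww, PP]
  apply congrArg List.prod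
  apply List.map_congr_left
  intro t ht
  rw [show 2 ^ k - 1 - 1 - t = 2 ^ k - 2 - t from by omega]

section WithHyp2

variable (x y : G)

lemma PP_mem (hca : ∀ z ∈ Zsub x y, ∀ h ∈ Hsub x y, z * h = h * z)
    (j r : ℕ) (hj : 1 ≤ j) : PP x y j r ∈ Zsub x y := by
  refine list_prod_mem ?_
  intro g hg
  rw [List.mem_map] at hg
  obtain ⟨t, ht, rfl⟩ := hg
  exact itc_mem x y hca (zz_mem x y (j + t + 1) (j + t) (by omega) (by omega)) _

lemma PP_succ (hca : ∀ z ∈ Zsub x y, ∀ h ∈ Hsub x y, z * h = h * z)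
    (j r : ℕ) (hj : 1 ≤ j) :
    PP x y j (r + 1) = pc (PP x y j r) x * zz x y (j + r + 1) (j + r) := by
  have h1 : PP x y j (r + 1)
      = ((List.range r).map (fun t => itc x (zz x y (j + t + 1) (j + t)) (r - t))).prod
        * zz x y (j + r + 1) (j + r) := by
    rw [PP, List.range_succ, List.map_append, List.prod_append]
    refine congrArg₂ (· * ·) ?_ ?_
    · apply congrArg List.prod
      apply List.map_congr_left
      intro t ht
      rw [List.mem_range] at ht
      rw [show r + 1 - 1 - t = r - t from by omega]
    · simp only [List.map_cons, List.map_nil, List.prod_cons, List.prod_nil, mul_one]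
      rw [show r + 1 - 1 - r = 0 by omega]
      rfl
  have h2 : pc (PP x y j r) x
      = ((List.range r).map (fun t => itc x (zz x y (j + t + 1) (j + t)) (r - t))).prod := by
    rw [← itc_one_right, PP,
      itc_prod x y hca _ (by
        intro g hg
        rw [List.mem_map] at hg
        obtain ⟨t, ht, rfl⟩ := hg
        exact itc_mem x y hca (zz_mem x y (j + t + 1) (j + t) (by omega) (by omega)) _),
      List.map_map]
    apply congrArg List.prod
    apply List.map_congr_left
    intro t ht
    rw [List.mem_range] at ht
    simp only [Function.comp_apply]
    rw [itc_comp]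
    rw [show r - 1 - t + 1 = r - t from by omega]
  rw [h1, h2]

lemma itc_ccsq (hca : ∀ z ∈ Zsub x y, ∀ h ∈ Hsub x y, z * h = h * z)
    (j : ℕ) (hj : 1 ≤ j) (r : ℕ) :
    itc x (cc x y j ^ 2) r = cc x y (j + r) ^ 2 * PP x y j r := by
  induction r with
  | zero => simp [PP, itc]
  | succ r ih =>
    have hPP := PP_mem x y hca j r hj
    have step : itc x (cc x y j ^ 2) (r + 1)
        = pc (cc x y (j + r) ^ 2) x * pc (PP x y j r) x := by
      simp only [itc]
      rw [ih, pcx_mul x y hca (ccsq_mem x y (j + r) (by omega)) hPP]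
    rw [step, pcx_ccsq x y hca (j + r) (by omega), PP_succ x y hca j r hj]
    have hcm : pc (PP x y j r) x * zz x y (j + r + 1) (j + r)
        = zz x y (j + r + 1) (j + r) * pc (PP x y j r) x :=
      hca _ (pcx_mem x y hca hPP) _
        (Zsub_le_Hsub x y (zz_mem x y (j + r + 1) (j + r) (by omega) (by omega)))
    rw [show j + (r + 1) = j + r + 1 by omega, hcm]
    group

lemma itc_PP (hca : ∀ z ∈ Zsub x y, ∀ h ∈ Hsub x y, z * h = h * z)
    (j r s : ℕ) (hj : 1 ≤ j) :
    itc x (PP x y j r) s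
      = ((List.range r).map
          (fun t => itc x (zz x y (j + t + 1) (j + t)) (r - 1 - t + s))).prod := by
  rw [PP,
    itc_prod x y hca _ (by
      intro g hg
      rw [List.mem_map] at hg
      obtain ⟨t, ht, rfl⟩ := hg
      exact itc_mem x y hca (zz_mem x y (j + t + 1) (j + t) (by omega) (by omega)) _),
    List.map_map]
  apply congrArg List.prod
  apply List.map_congr_left
  intro t ht
  simp only [Function.comp_apply]
  exact itc_comp x _ _ _

lemma PP_split (hca : ∀ z ∈ Zsub x y, ∀ h ∈ Hsub x y, z * h = h * z)
    (i N : ℕ) (hi : 1 ≤ i) (hN : 1 ≤ N) :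
    PP x y i (N + N - 1) = itc x (PP x y i (N - 1)) N * PP x y (i + N - 1) N := by
  rw [itc_PP x y hca _ _ _ hi, PP, show N + N - 1 = (N - 1) + N by omega, List.range_add,
    List.map_append, List.prod_append]
  refine congrArg₂ (· * ·) ?_ ?_
  · apply congrArg List.prod
    apply List.map_congr_left
    intro t ht
    rw [List.mem_range] at ht
    rw [show N - 1 + N - 1 - t = N - 1 - 1 - t + N from by omega]
  · rw [PP, List.map_map]
    apply congrArg List.prod
    apply List.map_congr_left
    intro s hs
    rw [List.mem_range] at hs
    simp only [Function.comp_apply]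
    rw [show i + (N - 1 + s) + 1 = i + N - 1 + s + 1 by omega,
      show i + (N - 1 + s) = i + N - 1 + s by omega,
      show N - 1 + N - 1 - (N - 1 + s) = N - 1 - s by omega]

lemma main_identity (hca : ∀ z ∈ Zsub x y, ∀ h ∈ Hsub x y, z * h = h * z)
    (hz2 : ∀ z ∈ Zsub x y, z ^ 2 = 1) (k : ℕ) : ∀ i : ℕ, 1 ≤ i →
    (x ^ 2 ^ k)⁻¹ * (x * cc x y i ^ 2) ^ 2 ^ k
      = cc x y (i + 2 ^ k - 1) ^ 2 * PP x y i (2 ^ k - 1) := by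
  induction k with
  | zero =>
    intro i hi
    rw [show (2:ℕ) ^ 0 = 1 from rfl, pow_one, pow_one,
      show i + 1 - 1 = i from by omega, show (1:ℕ) - 1 = 0 from rfl, PP]
    simp only [List.range_zero, List.map_nil, List.prod_nil, mul_one]
    group
  | succ k ih =>
    intro i hi
    have hNpos : 1 ≤ 2 ^ k := Nat.one_le_two_pow
    have hpow : (2 : ℕ) ^ (k + 1) = 2 ^ k + 2 ^ k := by rw [pow_succ, Nat.mul_two]
    rw [hpow, pow_add, pow_add]
    have hA := ih i hi
    have hAmem : cc x y (i + 2 ^ k - 1) ^ 2 * PP x y i (2 ^ k - 1) ∈ Zsub x y :=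
      mul_mem (ccsq_mem x y _ (by omega)) (PP_mem x y hca i (2 ^ k - 1) hi)
    have key : (x ^ 2 ^ k * x ^ 2 ^ k)⁻¹
          * ((x * cc x y i ^ 2) ^ 2 ^ k * (x * cc x y i ^ 2) ^ 2 ^ k)
        = (x ^ 2 ^ k)⁻¹ * ((x ^ 2 ^ k)⁻¹ * (x * cc x y i ^ 2) ^ 2 ^ k) * x ^ 2 ^ k
          * ((x ^ 2 ^ k)⁻¹ * (x * cc x y i ^ 2) ^ 2 ^ k) := by group
    rw [key, hA]
    have hconj : (x ^ 2 ^ k)⁻¹ * (cc x y (i + 2 ^ k - 1) ^ 2 * PP x y i (2 ^ k - 1)) * x ^ 2 ^ k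
        = (cc x y (i + 2 ^ k - 1) ^ 2 * PP x y i (2 ^ k - 1))
          * itc x (cc x y (i + 2 ^ k - 1) ^ 2 * PP x y i (2 ^ k - 1)) (2 ^ k) :=
      conj_pow x y hca hz2 k hAmem
    rw [hconj]
    have hAA : ∀ A ∈ Zsub x y, A * itc x A (2 ^ k) * A = itc x A (2 ^ k) := by
      intro A hA'
      have hswap : itc x A (2 ^ k) * A = A * itc x A (2 ^ k) :=
        hca _ (itc_mem x y hca hA' _) _ (Zsub_le_Hsub x y hA')
      have h2 : A ^ 2 = 1 := hz2 _ hA'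
      rw [mul_assoc, hswap, ← mul_assoc, ← sq, h2, one_mul]
    rw [hAA _ hAmem,
      itc_mul x y hca (ccsq_mem x y _ (by omega)) (PP_mem x y hca i (2 ^ k - 1) hi),
      itc_ccsq x y hca (i + 2 ^ k - 1) (by omega) (2 ^ k)]
    have hswap2 : PP x y (i + 2 ^ k - 1) (2 ^ k) * itc x (PP x y i (2 ^ k - 1)) (2 ^ k)
        = itc x (PP x y i (2 ^ k - 1)) (2 ^ k) * PP x y (i + 2 ^ k - 1) (2 ^ k) :=
      hca _ (PP_mem x y hca _ _ (by omega)) _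
        (Zsub_le_Hsub x y (itc_mem x y hca (PP_mem x y hca i (2 ^ k - 1) hi) _))
    rw [mul_assoc, hswap2, ← PP_split x y hca i (2 ^ k) hi hNpos,
      show i + 2 ^ k - 1 + 2 ^ k = i + (2 ^ k + 2 ^ k) - 1 by omega]

end WithHyp2

theorem ww_diag_power_identity (x y : G)
    (hca : ∀ z ∈ Zsub x y, ∀ h ∈ Hsub x y, z * h = h * z)
    (hz2 : ∀ z ∈ Zsub x y, z ^ 2 = 1)
    (i k : ℕ) (hi : 1 ≤ i) (hk : 1 ≤ k) :
    (x ^ 2 ^ k)⁻¹ * (x * cc x y i ^ 2) ^ 2 ^ k =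
        cc x y (i + 2 ^ k - 1) ^ 2 * ww x y i i k ∧
      cc x y (i + 2 ^ k - 1) ^ 2 * ww x y i i k ∈ pow2Sub G k := by
  have h1 : (x ^ 2 ^ k)⁻¹ * (x * cc x y i ^ 2) ^ 2 ^ k =
      cc x y (i + 2 ^ k - 1) ^ 2 * ww x y i i k := by
    rw [ww_eq_PP]
    exact main_identity x y hca hz2 k i hi
  refine ⟨h1, ?_⟩
  rw [← h1, ← inv_pow]
  exact mul_mem (Subgroup.subset_closure ⟨x⁻¹, rfl⟩)
    (Subgroup.subset_closure ⟨x * cc x y i ^ 2, rfl⟩)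

end Paper
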